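/- Suppose the φ-splice C₂ ▵_φ C₁ is a copula, and suppose that for some x₁, x₂ ∈ [0,1] with x₁ < x₂ one has Γ(x₁) + Γ(x₂) ≥ x₁ + φ(x₁). Then at least one of the following holds: V_{x₁}^{x₂}(Γ̂) ≥ Γ̂(x₁) + Γ̂(x₂), or V_{x₁}^{x₂}(Γ̃) ≥ Γ̃(x₁) + Γ̃(x₂). -/

import Mathlib

open Set MeasureTheory

/-- `Γ̂(t) = t - Γ(t)`. -/
def Ghat (Γ : ℝ → ℝ) : ℝ → ℝ := fun t => t - Γ t

/-- `Γ̃(t) = φ(t) - Γ(t)`. -/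
def Gtil (φ Γ : ℝ → ℝ) : ℝ → ℝ := fun t => φ t - Γ t

/-- The (signed) total variation `V_a^b(f)` of `f` on `[a, b] ⊆ [0, 1]`, with
the conventions `V_b^a(f) = -V_a^b(f)` and `V_a^a(f) = 0`. -/
noncomputable def sV (f : ℝ → ℝ) (a b : ℝ) : ℝ := variationOnFromTo f (Set.Icc 0 1) a b

/-- `f₁(x, y) = x - (1/2) (V_{φ⁻¹(y)}^x(Γ̂) + Γ̂(x) + Γ̂(φ⁻¹(y)))`, where `ψ = φ⁻¹`. -/
noncomputable def f1 (ψ Γ : ℝ → ℝ) (x y : ℝ) : ℝ :=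
  x - (1/2) * (sV (Ghat Γ) (ψ y) x + Ghat Γ x + Ghat Γ (ψ y))

/-- `f₂(x, y) = y - (1/2) (V_x^{φ⁻¹(y)}(Γ̃) + Γ̃(x) + Γ̃(φ⁻¹(y)))`, where `ψ = φ⁻¹`. -/
noncomputable def f2 (φ ψ Γ : ℝ → ℝ) (x y : ℝ) : ℝ :=
  y - (1/2) * (sV (Gtil φ Γ) x (ψ y) + Gtil φ Γ x + Gtil φ Γ (ψ y))

/-- `C₁(x, y) = min {x, y, f₁(x, y)}`. -/
noncomputable def C1 (ψ Γ : ℝ → ℝ) (x y : ℝ) : ℝ := min x (min y (f1 ψ Γ x y))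

/-- `C₂(x, y) = min {x, y, f₂(x, y)}`. -/
noncomputable def C2 (φ ψ Γ : ℝ → ℝ) (x y : ℝ) : ℝ := min x (min y (f2 φ ψ Γ x y))

/-- The φ-splice `C₂ ▵_φ C₁`: equal to `C₁` when `y ≤ φ(x)`, to `C₂` when `y ≥ φ(x)`. -/
noncomputable def splice (φ ψ Γ : ℝ → ℝ) (x y : ℝ) : ℝ :=
  if y ≤ φ x then C1 ψ Γ x y else C2 φ ψ Γ x y

/-- A copula on `[0,1]²`: boundary conditions and 2-increasingness. -/
def IsCopula (C : ℝ → ℝ → ℝ) : Prop :=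
  (∀ x ∈ Set.Icc (0:ℝ) 1, ∀ y ∈ Set.Icc (0:ℝ) 1, C x y ∈ Set.Icc (0:ℝ) 1) ∧
  (∀ x ∈ Set.Icc (0:ℝ) 1, C x 0 = 0 ∧ C 0 x = 0 ∧ C x 1 = x ∧ C 1 x = x) ∧
  (∀ x₁ x₂ y₁ y₂ : ℝ, x₁ ∈ Set.Icc (0:ℝ) 1 → x₂ ∈ Set.Icc (0:ℝ) 1 →
    y₁ ∈ Set.Icc (0:ℝ) 1 → y₂ ∈ Set.Icc (0:ℝ) 1 → x₁ ≤ x₂ → y₁ ≤ y₂ →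
    0 ≤ C x₂ y₂ - C x₂ y₁ - C x₁ y₂ + C x₁ y₁)

/-- The greatest quasi-copula `A_Γ` with curvilinear section `Γ` (`ψ = φ⁻¹`). -/
noncomputable def AG (φ ψ Γ : ℝ → ℝ) (x y : ℝ) : ℝ :=
  if y ≤ φ x then min y (x - sSup (Ghat Γ '' Set.Icc (ψ y) x))
  else min x (y - sSup (Gtil φ Γ '' Set.Icc x (ψ y)))

/-- Auxiliary: variation comparison from a two-point control. -/
lemma my_eVar_le {f g : ℝ → ℝ} {s : Set ℝ}
    (h : ∀ a ∈ s, ∀ b ∈ s, a ≤ b → |f b - f a| ≤ g b - g a) :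
    eVariationOn f s ≤ eVariationOn g s := by
  apply iSup_le
  rintro ⟨n, u, hu, us⟩
  have key : ∀ i : ℕ, edist (f (u (i+1))) (f (u i)) ≤ edist (g (u (i+1))) (g (u i)) := by
    intro i
    have h1 := h (u i) (us i) (u (i+1)) (us (i+1)) (hu (Nat.le_succ i))
    rw [edist_dist, edist_dist, Real.dist_eq, Real.dist_eq]
    exact ENNReal.ofReal_le_ofReal (h1.trans (le_abs_self _))
  calc ∑ i ∈ Finset.range n, edist (f (u (i + 1))) (f (u i))
      ≤ ∑ i ∈ Finset.range n, edist (g (u (i + 1))) (g (u i)) :=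
        Finset.sum_le_sum (fun i _ => key i)
    _ ≤ eVariationOn g s := eVariationOn.sum_le (f := g) (n := n) hu us

/-- Auxiliary: two-point lower bound for the signed variation. -/
lemma abs_sub_le_sV {f : ℝ → ℝ} (hf : LocallyBoundedVariationOn f (Set.Icc 0 1))
    {a b : ℝ} (ha : a ∈ Set.Icc (0:ℝ) 1) (hb : b ∈ Set.Icc (0:ℝ) 1) (hab : a ≤ b) :
    |f b - f a| ≤ sV f a b := by
  rw [sV, variationOnFromTo.eq_of_le f _ hab, ← Real.dist_eq]
  exact (hf a b ha hb).dist_le ⟨hb, ⟨hab, le_refl b⟩⟩ ⟨ha, ⟨le_refl a, hab⟩⟩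

theorem stmt_13
    (φ Γ : ℝ → ℝ)
    (hφcont : ContinuousOn φ (Set.Icc 0 1))
    (hφmono : StrictMonoOn φ (Set.Icc 0 1))
    (hφ0 : φ 0 = 0) (hφ1 : φ 1 = 1)
    (hΓrange : ∀ t ∈ Set.Icc (0:ℝ) 1, max 0 (t + φ t - 1) ≤ Γ t ∧ Γ t ≤ min t (φ t))
    (hΓlip : ∀ t₁ t₂ : ℝ, t₁ ∈ Set.Icc (0:ℝ) 1 → t₂ ∈ Set.Icc (0:ℝ) 1 → t₁ ≤ t₂ →
      0 ≤ Γ t₂ - Γ t₁ ∧ Γ t₂ - Γ t₁ ≤ (t₂ - t₁) + (φ t₂ - φ t₁))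
    (ψ : ℝ → ℝ)
    (hψmem : ∀ y ∈ Set.Icc (0:ℝ) 1, ψ y ∈ Set.Icc (0:ℝ) 1)
    (hψφ : ∀ t ∈ Set.Icc (0:ℝ) 1, ψ (φ t) = t)
    (hφψ : ∀ y ∈ Set.Icc (0:ℝ) 1, φ (ψ y) = y)
    (hcop : IsCopula (splice φ ψ Γ))
    (x₁ x₂ : ℝ) (hx₁ : x₁ ∈ Set.Icc (0:ℝ) 1) (hx₂ : x₂ ∈ Set.Icc (0:ℝ) 1) (hlt : x₁ < x₂)
    (hsum : Γ x₁ + Γ x₂ ≥ x₁ + φ x₁) :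
    sV (Ghat Γ) x₁ x₂ ≥ Ghat Γ x₁ + Ghat Γ x₂ ∨
    sV (Gtil φ Γ) x₁ x₂ ≥ Gtil φ Γ x₁ + Gtil φ Γ x₂ := by
  by_contra hcon
  push_neg at hcon
  obtain ⟨hV1, hV2⟩ := hcon
  have Ghdef : ∀ z : ℝ, Ghat Γ z = z - Γ z := fun z => rfl
  have Gtdef : ∀ z : ℝ, Gtil φ Γ z = φ z - Γ z := fun z => rfl
  have hφm : MonotoneOn φ (Set.Icc 0 1) := hφmono.monotoneOn
  have h0I : (0:ℝ) ∈ Set.Icc (0:ℝ) 1 := ⟨le_refl 0, zero_le_one⟩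
  have h1I : (1:ℝ) ∈ Set.Icc (0:ℝ) 1 := ⟨zero_le_one, le_refl 1⟩
  have hmemI : ∀ {z : ℝ}, z ∈ Set.Icc x₁ x₂ → z ∈ Set.Icc (0:ℝ) 1 := by
    intro z hz
    exact ⟨le_trans hx₁.1 hz.1, le_trans hz.2 hx₂.2⟩
  have hφmem : ∀ {z : ℝ}, z ∈ Set.Icc (0:ℝ) 1 → φ z ∈ Set.Icc (0:ℝ) 1 := by
    intro z hz
    constructor
    · rw [← hφ0]; exact hφm h0I hz hz.1
    · rw [← hφ1]; exact hφm hz h1I hz.2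
  -- bounded variation of Ghat and Gtil
  have hgmono : MonotoneOn (fun u : ℝ => u + φ u) (Set.Icc 0 1) := by
    intro a ha b hb hab
    have := hφm ha hb hab
    simp only
    linarith
  have hgvar : eVariationOn (fun u : ℝ => u + φ u) (Set.Icc 0 1) ≠ ⊤ := by
    have h := hgmono.eVariationOn_le h0I h1I
    rw [Set.inter_self] at h
    exact (h.trans_lt ENNReal.ofReal_lt_top).ne
  have hBVhat : BoundedVariationOn (Ghat Γ) (Set.Icc 0 1) := by
    refine ne_top_of_le_ne_top hgvar (my_eVar_le ?_)
    intro a ha b hb hab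
    have h1 := hΓlip a b ha hb hab
    have h2 := hφm ha hb hab
    rw [abs_le]
    constructor
    · simp only [Ghat]; linarith [h1.1, h1.2]
    · simp only [Ghat]; linarith [h1.1, h1.2]
  have hBVtil : BoundedVariationOn (Gtil φ Γ) (Set.Icc 0 1) := by
    refine ne_top_of_le_ne_top hgvar (my_eVar_le ?_)
    intro a ha b hb hab
    have h1 := hΓlip a b ha hb hab
    have h2 := hφm ha hb hab
    rw [abs_le]
    constructor
    · simp only [Gtil]; linarith [h1.1, h1.2]
    · simp only [Gtil]; linarith [h1.1, h1.2]
  have hLhat : LocallyBoundedVariationOn (Ghat Γ) (Set.Icc 0 1) :=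
    hBVhat.locallyBoundedVariationOn
  have hLtil : LocallyBoundedVariationOn (Gtil φ Γ) (Set.Icc 0 1) :=
    hBVtil.locallyBoundedVariationOn
  -- lower bounds on Ghat and Gtil on [x₁,x₂]
  have hGhat_lb : ∀ z ∈ Set.Icc x₁ x₂,
      (Ghat Γ x₁ + Ghat Γ x₂ - sV (Ghat Γ) x₁ x₂)/2 ≤ Ghat Γ z := by
    intro z hz
    have hzI := hmemI hz
    have h1 := abs_sub_le_sV hLhat hx₁ hzI hz.1
    have h2 := abs_sub_le_sV hLhat hzI hx₂ hz.2
    have h1' : Ghat Γ x₁ - Ghat Γ z ≤ sV (Ghat Γ) x₁ z :=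
      le_trans (le_trans (le_abs_self _) (abs_sub_comm _ _).le) h1
    have h2' : Ghat Γ x₂ - Ghat Γ z ≤ sV (Ghat Γ) z x₂ :=
      le_trans (le_abs_self _) h2
    have hadd : sV (Ghat Γ) x₁ z + sV (Ghat Γ) z x₂ = sV (Ghat Γ) x₁ x₂ :=
      variationOnFromTo.add hLhat hx₁ hzI hx₂
    linarith
  have hGtil_lb : ∀ z ∈ Set.Icc x₁ x₂,
      (Gtil φ Γ x₁ + Gtil φ Γ x₂ - sV (Gtil φ Γ) x₁ x₂)/2 ≤ Gtil φ Γ z := by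
    intro z hz
    have hzI := hmemI hz
    have h1 := abs_sub_le_sV hLtil hx₁ hzI hz.1
    have h2 := abs_sub_le_sV hLtil hzI hx₂ hz.2
    have h1' : Gtil φ Γ x₁ - Gtil φ Γ z ≤ sV (Gtil φ Γ) x₁ z :=
      le_trans (le_trans (le_abs_self _) (abs_sub_comm _ _).le) h1
    have h2' : Gtil φ Γ x₂ - Gtil φ Γ z ≤ sV (Gtil φ Γ) z x₂ :=
      le_trans (le_abs_self _) h2
    have hadd : sV (Gtil φ Γ) x₁ z + sV (Gtil φ Γ) z x₂ = sV (Gtil φ Γ) x₁ x₂ :=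
      variationOnFromTo.add hLtil hx₁ hzI hx₂
    linarith
  set ε : ℝ := min ((Ghat Γ x₁ + Ghat Γ x₂ - sV (Ghat Γ) x₁ x₂)/2)
      ((Gtil φ Γ x₁ + Gtil φ Γ x₂ - sV (Gtil φ Γ) x₁ x₂)/2) with hεdef
  have hε0 : 0 < ε := lt_min (by linarith) (by linarith)
  have hεhat : ∀ z ∈ Set.Icc x₁ x₂, ε ≤ Ghat Γ z :=
    fun z hz => le_trans (min_le_left _ _) (hGhat_lb z hz)
  have hεtil : ∀ z ∈ Set.Icc x₁ x₂, ε ≤ Gtil φ Γ z :=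
    fun z hz => le_trans (min_le_right _ _) (hGtil_lb z hz)
  -- the key local inequality from 2-increasingness across the curve
  have locKey : ∀ a b : ℝ, a ∈ Set.Icc x₁ x₂ → b ∈ Set.Icc x₁ x₂ → a < b →
      (b - a) + (φ b - φ a) ≤ ε →
      (b - a) + (φ b - φ a) ≤ sV (Ghat Γ) a b + sV (Gtil φ Γ) a b := by
    intro a b ha hb hab hmesh
    have haI := hmemI ha
    have hbI := hmemI hb
    have hφaI := hφmem haI
    have hφbI := hφmem hbI
    have hψa : ψ (φ a) = a := hψφ a haI
    have hψb : ψ (φ b) = b := hψφ b hbI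
    have hφab : φ a < φ b := hφmono haI hbI hab
    have hΓa := hΓrange a haI
    have hΓb := hΓrange b hbI
    have hΓa1 : Γ a ≤ a := le_trans hΓa.2 (min_le_left _ _)
    have hΓa2 : Γ a ≤ φ a := le_trans hΓa.2 (min_le_right _ _)
    have hΓb1 : Γ b ≤ b := le_trans hΓb.2 (min_le_left _ _)
    have hΓb2 : Γ b ≤ φ b := le_trans hΓb.2 (min_le_right _ _)
    have hlip := (hΓlip a b haI hbI hab.le).2
    have hεa1 : ε ≤ Ghat Γ a := hεhat a ha
    have hεa2 : ε ≤ Gtil φ Γ a := hεtil a ha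
    -- Γ b is small
    have hΓbφa : Γ b ≤ φ a := by
      have := Gtdef a
      linarith
    have hΓba : Γ b ≤ a := by
      have := Ghdef a
      linarith
    have hVhat : Ghat Γ b - Ghat Γ a ≤ sV (Ghat Γ) a b :=
      le_trans (le_abs_self _) (abs_sub_le_sV hLhat haI hbI hab.le)
    have hVtil : Gtil φ Γ b - Gtil φ Γ a ≤ sV (Gtil φ Γ) a b :=
      le_trans (le_abs_self _) (abs_sub_le_sV hLtil haI hbI hab.le)
    have hsVaa : ∀ f : ℝ → ℝ, sV f a a = 0 := fun f => variationOnFromTo.self f _ a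
    have hsVbb : ∀ f : ℝ → ℝ, sV f b b = 0 := fun f => variationOnFromTo.self f _ b
    -- the four corner values
    have e1 : splice φ ψ Γ a (φ a) = Γ a := by
      simp only [splice, C1, f1, hψa, if_pos (le_refl (φ a))]
      rw [hsVaa]
      have h : a - 1/2 * (0 + Ghat Γ a + Ghat Γ a) = Γ a := by
        rw [Ghdef]; ring
      rw [h, min_eq_right hΓa2, min_eq_right hΓa1]
    have e2 : splice φ ψ Γ b (φ b) = Γ b := by
      simp only [splice, C1, f1, hψb, if_pos (le_refl (φ b))]
      rw [hsVbb]
      have h : b - 1/2 * (0 + Ghat Γ b + Ghat Γ b) = Γ b := by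
        rw [Ghdef]; ring
      rw [h, min_eq_right hΓb2, min_eq_right hΓb1]
    have hf1Γb : b - 1/2 * (sV (Ghat Γ) a b + Ghat Γ b + Ghat Γ a) ≤ Γ b := by
      have h1 := Ghdef a
      have h2 := Ghdef b
      linarith
    have e3 : splice φ ψ Γ b (φ a)
        = b - 1/2 * (sV (Ghat Γ) a b + Ghat Γ b + Ghat Γ a) := by
      simp only [splice, C1, f1, hψa, if_pos hφab.le]
      rw [min_eq_right (le_trans hf1Γb hΓbφa), min_eq_right (le_trans hf1Γb hΓb1)]
    have hf2Γb : φ b - 1/2 * (sV (Gtil φ Γ) a b + Gtil φ Γ a + Gtil φ Γ b) ≤ Γ b := by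
      have h1 := Gtdef a
      have h2 := Gtdef b
      linarith
    have e4 : splice φ ψ Γ a (φ b)
        = φ b - 1/2 * (sV (Gtil φ Γ) a b + Gtil φ Γ a + Gtil φ Γ b) := by
      simp only [splice, C2, f2, hψb, if_neg (not_le.mpr hφab)]
      rw [min_eq_right (le_trans hf2Γb hΓb2), min_eq_right (le_trans hf2Γb hΓba)]
    have rect := hcop.2.2 a b (φ a) (φ b) haI hbI hφaI hφbI hab.le hφab.le
    rw [e1, e2, e3, e4] at rect
    have h1 := Ghdef a
    have h2 := Ghdef b
    have h3 := Gtdef a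
    have h4 := Gtdef b
    linarith
  -- build a fine partition of [x₁, x₂]
  have hx21 : 0 < x₂ - x₁ := by linarith
  have hunif := isCompact_Icc.uniformContinuousOn_of_continuous hφcont
  rw [Metric.uniformContinuousOn_iff] at hunif
  obtain ⟨δ, hδ0, hδ⟩ := hunif (ε/2) (by positivity)
  set c : ℝ := min δ (ε/2) with hcdef
  have hc0 : 0 < c := lt_min hδ0 (by positivity)
  obtain ⟨n, hn⟩ := exists_nat_gt ((x₂ - x₁)/c)
  have hn0 : 0 < (n:ℝ) := lt_of_le_of_lt (le_of_lt (div_pos hx21 hc0)) hn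
  set d : ℝ := (x₂ - x₁)/n with hddef
  have hd0 : 0 < d := div_pos hx21 hn0
  have hdc : d < c := by
    rw [hddef, div_lt_iff₀ hn0, mul_comm]
    exact (div_lt_iff₀ hc0).mp hn
  set T : ℕ → ℝ := fun k => x₁ + k * d with hTdef
  have hTsucc : ∀ m : ℕ, T (m+1) - T m = d := by
    intro m; simp only [hTdef]; push_cast; ring
  have hTmem : ∀ m : ℕ, m ≤ n → T m ∈ Set.Icc x₁ x₂ := by
    intro m hm
    have hmn : (m:ℝ) ≤ n := Nat.cast_le.mpr hm
    have hmd : (0:ℝ) ≤ (m:ℝ) * d := mul_nonneg (Nat.cast_nonneg m) hd0.le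
    have h1 : (m:ℝ)*d ≤ n*d := mul_le_mul_of_nonneg_right hmn hd0.le
    have h2 : (n:ℝ)*d = x₂ - x₁ := by
      rw [hddef]; field_simp
    constructor
    · simp only [hTdef]; linarith
    · simp only [hTdef]; linarith
  have hTn : T n = x₂ := by
    simp only [hTdef, hddef]
    field_simp
    ring
  have key : ∀ m : ℕ, m ≤ n →
      (T m - x₁) + (φ (T m) - φ x₁) ≤ sV (Ghat Γ) x₁ (T m) + sV (Gtil φ Γ) x₁ (T m) := by
    intro m
    induction m with
    | zero =>
      intro _
      have hT0 : T 0 = x₁ := by simp [hTdef]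
      rw [hT0, show sV (Ghat Γ) x₁ x₁ = 0 from variationOnFromTo.self _ _ _,
        show sV (Gtil φ Γ) x₁ x₁ = 0 from variationOnFromTo.self _ _ _]
      linarith
    | succ m ih =>
      intro hm1
      have hm : m ≤ n := Nat.le_of_succ_le hm1
      have ha := hTmem m hm
      have hb := hTmem (m+1) hm1
      have haI := hmemI ha
      have hbI := hmemI hb
      have hlt' : T m < T (m+1) := by
        have := hTsucc m; linarith
      have hΦ : φ (T (m+1)) - φ (T m) < ε/2 := by
        have habs : |T (m+1) - T m| = d := by
          rw [hTsucc m]; exact abs_of_nonneg hd0.le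
        have hdd : dist (T (m+1)) (T m) < δ := by
          rw [Real.dist_eq, habs]
          exact lt_of_lt_of_le hdc (min_le_left _ _)
        have hdist := hδ (T (m+1)) hbI (T m) haI hdd
        rw [Real.dist_eq] at hdist
        calc φ (T (m+1)) - φ (T m) ≤ |φ (T (m+1)) - φ (T m)| := le_abs_self _
          _ < ε/2 := hdist
      have hmesh : (T (m+1) - T m) + (φ (T (m+1)) - φ (T m)) ≤ ε := by
        have h1 := hTsucc m
        have h2 : d < ε/2 := lt_of_lt_of_le hdc (min_le_right _ _)
        linarith
      have loc := locKey (T m) (T (m+1)) ha hb hlt' hmesh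
      have add1 : sV (Ghat Γ) x₁ (T m) + sV (Ghat Γ) (T m) (T (m+1))
          = sV (Ghat Γ) x₁ (T (m+1)) := variationOnFromTo.add hLhat hx₁ haI hbI
      have add2 : sV (Gtil φ Γ) x₁ (T m) + sV (Gtil φ Γ) (T m) (T (m+1))
          = sV (Gtil φ Γ) x₁ (T (m+1)) := variationOnFromTo.add hLtil hx₁ haI hbI
      have ihm := ih hm
      linarith
  have fin := key n le_rfl
  rw [hTn] at fin
  have h1 := Ghdef x₁
  have h2 := Ghdef x₂
  have h3 := Gtdef x₁
  have h4 := Gtdef x₂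
  linarith
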